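/- The LIP-additive Asplund distance d(f,g) = c₁ ⊖ c₂, with c₁ = inf{c : f ≤ c ⊕ g} and c₂ = sup{c : c ⊕ g ≤ f}, is invariant under LIP-addition of a constant to f: d(f ⊕ k, g) = d(f, g) for all constants k ∈ ]-∞, M[. -/
import Mathlib

noncomputable def lipAdd (M f g : ℝ) : ℝ := f + g - f * g / M

noncomputable def lipSub (M f g : ℝ) : ℝ := (f - g) / (1 - g / M)

/-- LIP-additive Asplund distance `d(f,g) = c₁ ⊖ c₂` with
`c₁ = inf{c : f ≤ c ⊕ g}` and `c₂ = sup{c : c ⊕ g ≤ f}`. -/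
noncomputable def aspDist (M : ℝ) {D : Type*} (f g : D → ℝ) : ℝ :=
  lipSub M (sInf {c : ℝ | ∀ x, f x ≤ lipAdd M c (g x)})
           (sSup {c : ℝ | ∀ x, lipAdd M c (g x) ≤ f x})

lemma sInf_affine (a k : ℝ) (ha : 0 < a) (S : Set ℝ) (hne : S.Nonempty)
    (hbd : BddBelow S) :
    sInf ((fun c => a * c + k) '' S) = a * sInf S + k := by
  have hmono : Monotone (fun c : ℝ => a * c + k) := fun x y hxy => by
    dsimp; nlinarith
  have hcont : ContinuousAt (fun c : ℝ => a * c + k) (sInf S) := by fun_prop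
  exact (hmono.map_csInf_of_continuousAt hcont hne hbd).symm

lemma sSup_affine (a k : ℝ) (ha : 0 < a) (S : Set ℝ) (hne : S.Nonempty)
    (hbd : BddAbove S) :
    sSup ((fun c => a * c + k) '' S) = a * sSup S + k := by
  have hmono : Monotone (fun c : ℝ => a * c + k) := fun x y hxy => by
    dsimp; nlinarith
  have hcont : ContinuousAt (fun c : ℝ => a * c + k) (sSup S) := by fun_prop
  exact (hmono.map_csSup_of_continuousAt hcont hne hbd).symm

lemma lipSub_affine (M k x y : ℝ) (hM : M ≠ 0) (ha : (1 : ℝ) - k / M ≠ 0) :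
    lipSub M ((1 - k / M) * x + k) ((1 - k / M) * y + k) = lipSub M x y := by
  unfold lipSub
  have h1 : 1 - ((1 - k / M) * y + k) / M = (1 - k / M) * (1 - y / M) := by
    field_simp; ring
  have h2 : (1 - k / M) * x + k - ((1 - k / M) * y + k) = (1 - k / M) * (x - y) := by
    ring
  rw [h1, h2, mul_div_mul_left _ _ ha]

lemma lipAdd_eq (M c v : ℝ) : lipAdd M c v = c * (1 - v / M) + v := by
  unfold lipAdd; ring

lemma lipAdd_shift (M k c v : ℝ) (hM : M ≠ 0) (hMk : M - k ≠ 0)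
    (hk : (1 : ℝ) - k / M ≠ 0) :
    lipAdd M ((c - k) / (1 - k / M)) v = (lipAdd M c v - k) / (1 - k / M) := by
  unfold lipAdd
  field_simp [hMk]
  ring

theorem aspDist_lipAdd_const (M : ℝ) (hM : 0 < M) {D : Type*} [Fintype D]
    [Nonempty D] (f g : D → ℝ)
    (hf : ∀ x, 0 ≤ f x ∧ f x < M) (hg : ∀ x, 0 ≤ g x ∧ g x < M)
    (k : ℝ) (hk : k < M) :
    aspDist M (fun x => lipAdd M (f x) k) g = aspDist M f g := by
  have hM' : M ≠ 0 := ne_of_gt hM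
  have ha0 : 0 < 1 - k / M := by
    have : k / M < 1 := (div_lt_one hM).mpr hk
    linarith
  have ha' : (1 : ℝ) - k / M ≠ 0 := ne_of_gt ha0
  have hMk : M - k ≠ 0 := ne_of_gt (show (0:ℝ) < M - k by linarith)
  have h1 : ∀ x, lipAdd M (f x) k = (1 - k / M) * f x + k := by
    intro x; unfold lipAdd; field_simp; ring
  have key : ∀ (c : ℝ) (x : D), lipAdd M (f x) k ≤ lipAdd M c (g x) ↔
      f x ≤ lipAdd M ((c - k) / (1 - k / M)) (g x) := by
    intro c x
    rw [h1, lipAdd_shift M k c (g x) hM' hMk ha', le_div_iff₀ ha0]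
    constructor <;> intro h <;> nlinarith [h]
  have key2 : ∀ (c : ℝ) (x : D), lipAdd M c (g x) ≤ lipAdd M (f x) k ↔
      lipAdd M ((c - k) / (1 - k / M)) (g x) ≤ f x := by
    intro c x
    rw [h1, lipAdd_shift M k c (g x) hM' hMk ha', div_le_iff₀ ha0]
    constructor <;> intro h <;> nlinarith [h]
  have hcancel : ∀ d : ℝ, ((1 - k / M) * d + k - k) / (1 - k / M) = d := by
    intro d; field_simp [hMk]; ring
  have hset1 : {c : ℝ | ∀ x, lipAdd M (f x) k ≤ lipAdd M c (g x)}
      = (fun c => (1 - k / M) * c + k) '' {c : ℝ | ∀ x, f x ≤ lipAdd M c (g x)} := by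
    ext c
    simp only [Set.mem_setOf_eq, Set.mem_image]
    constructor
    · intro h
      refine ⟨(c - k) / (1 - k / M), fun x => (key c x).mp (h x), ?_⟩
      field_simp [hMk]
      ring
    · rintro ⟨d, hd, rfl⟩ x
      rw [key, hcancel]
      exact hd x
  have hset2 : {c : ℝ | ∀ x, lipAdd M c (g x) ≤ lipAdd M (f x) k}
      = (fun c => (1 - k / M) * c + k) '' {c : ℝ | ∀ x, lipAdd M c (g x) ≤ f x} := by
    ext c
    simp only [Set.mem_setOf_eq, Set.mem_image]
    constructor
    · intro h
      refine ⟨(c - k) / (1 - k / M), fun x => (key2 c x).mp (h x), ?_⟩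
      field_simp [hMk]
      ring
    · rintro ⟨d, hd, rfl⟩ x
      rw [key2, hcancel]
      exact hd x
  obtain ⟨x₀⟩ := ‹Nonempty D›
  have hgpos : ∀ x, 0 < 1 - g x / M := by
    intro x
    have : g x / M < 1 := (div_lt_one hM).mpr (hg x).2
    linarith
  have hS_ne : ({c : ℝ | ∀ x, f x ≤ lipAdd M c (g x)}).Nonempty := by
    refine ⟨M, fun x => ?_⟩
    rw [lipAdd_eq]
    have : M * (1 - g x / M) = M - g x := by field_simp
    rw [this]
    linarith [(hf x).2]
  have hS_bdd : BddBelow {c : ℝ | ∀ x, f x ≤ lipAdd M c (g x)} := by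
    refine ⟨(f x₀ - g x₀) / (1 - g x₀ / M), fun c hc => ?_⟩
    have h := hc x₀
    rw [lipAdd_eq] at h
    rw [div_le_iff₀ (hgpos x₀)]
    linarith
  have hT_ne : ({c : ℝ | ∀ x, lipAdd M c (g x) ≤ f x}).Nonempty := by
    refine ⟨Finset.univ.inf' Finset.univ_nonempty
      (fun x => (f x - g x) / (1 - g x / M)), fun x => ?_⟩
    have hle : Finset.univ.inf' Finset.univ_nonempty
        (fun x => (f x - g x) / (1 - g x / M)) ≤ (f x - g x) / (1 - g x / M) :=
      Finset.inf'_le _ (Finset.mem_univ x)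
    rw [le_div_iff₀ (hgpos x)] at hle
    rw [lipAdd_eq]
    linarith
  have hT_bdd : BddAbove {c : ℝ | ∀ x, lipAdd M c (g x) ≤ f x} := by
    refine ⟨(f x₀ - g x₀) / (1 - g x₀ / M), fun c hc => ?_⟩
    have h := hc x₀
    rw [lipAdd_eq] at h
    rw [le_div_iff₀ (hgpos x₀)]
    linarith
  unfold aspDist
  simp only []
  rw [hset1, hset2, sInf_affine _ k ha0 _ hS_ne hS_bdd,
    sSup_affine _ k ha0 _ hT_ne hT_bdd]
  exact lipSub_affine M k _ _ hM' ha'
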